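/- For every ρ > 0 and every z ∈ ℝ, the function V(ρ,z) = (1/A)·(A + Σ_{i=1}^r a_i·d_i)·( (Σ a_i/d_i)·(A + Σ a_i·d_i) / ( (Σ a_i·(z − z_i)/d_i)² + (Σ a_i·ρ/d_i)² ) − 1 ) satisfies the lower bound V(ρ,z) ≥ 1 + A·Σ_{i=1}^r a_i/d_i; in particular V(ρ,z) > 1. -/

import Mathlib

open Finset

lemma pair_aux (p q x y b c : ℝ) (hb : 0 < b) (hc : 0 < c)
    (h1 : p ^ 2 + x ^ 2 = b ^ 2) (h2 : q ^ 2 + y ^ 2 = c ^ 2) :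
    p * q + x * y ≤ b * c := by
  nlinarith [sq_nonneg (p * y - q * x), mul_pos hb hc, sq_nonneg (p*q + x*y + b*c)]

/-- The distance `d_i(ρ,z) = (ρ² + (z − z_i)²)^{1/2}`. -/
noncomputable def dd {r : ℕ} (zs : Fin r → ℝ) (ρ z : ℝ) (i : Fin r) : ℝ :=
  Real.sqrt (ρ ^ 2 + (z - zs i) ^ 2)

/-- The function `V(ρ,z)` of the Harmark form of the metric. -/
noncomputable def Vfun {r : ℕ} (A : ℝ) (a zs : Fin r → ℝ) (ρ z : ℝ) : ℝ :=
  (1 / A) * (A + ∑ i, a i * dd zs ρ z i) *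
    ((∑ i, a i / dd zs ρ z i) * (A + ∑ i, a i * dd zs ρ z i) /
      ((∑ i, a i * (z - zs i) / dd zs ρ z i) ^ 2 +
        (∑ i, a i * ρ / dd zs ρ z i) ^ 2) - 1)

set_option maxHeartbeats 1000000 in
theorem statement5 {r : ℕ} (hr : 1 ≤ r) (A : ℝ) (hA : 0 < A)
    (zs a : Fin r → ℝ)
    (hz : ∀ i j : Fin r, i < j → zs i < zs j)
    (ha : ∀ i, 0 < a i) (hsum : ∑ i, a i = 1)
    (ρ z : ℝ) (hρ : 0 < ρ) :
    1 + A * ∑ i, a i / dd zs ρ z i ≤ Vfun A a zs ρ z ∧ 1 < Vfun A a zs ρ z := by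
  have hne : (univ : Finset (Fin r)).Nonempty := by
    have : Nonempty (Fin r) := Fin.pos_iff_nonempty.1 hr
    exact univ_nonempty
  have hd : ∀ i, 0 < dd zs ρ z i := fun i => Real.sqrt_pos.2 (by positivity)
  have hd2 : ∀ i, (dd zs ρ z i) ^ 2 = ρ ^ 2 + (z - zs i) ^ 2 :=
    fun i => Real.sq_sqrt (by positivity)
  set d : Fin r → ℝ := dd zs ρ z with hddef
  set S := ∑ i, a i * d i with hSdef
  set T := ∑ i, a i / d i with hTdef
  set X := ∑ i, a i * (z - zs i) / d i with hXdef
  set Y := ∑ i, a i * ρ / d i with hYdef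
  have hS : 0 < S := Finset.sum_pos (fun i _ => mul_pos (ha i) (hd i)) hne
  have hT : 0 < T := Finset.sum_pos (fun i _ => div_pos (ha i) (hd i)) hne
  have hY : 0 < Y := Finset.sum_pos (fun i _ => div_pos (mul_pos (ha i) hρ) (hd i)) hne
  have hDpos : 0 < X ^ 2 + Y ^ 2 := by nlinarith [sq_nonneg X]
  have hsq : ∀ i, (a i * (z - zs i) / d i) ^ 2 + (a i * ρ / d i) ^ 2 = a i ^ 2 := by
    intro i
    have h1 := hd2 i
    have h2 := (hd i).ne'
    field_simp
    nlinarith [hd2 i]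
  -- D ≤ 1
  have hD1 : X ^ 2 + Y ^ 2 ≤ 1 := by
    have expand : X ^ 2 + Y ^ 2 = ∑ i, ∑ j,
        ((a i * (z - zs i) / d i) * (a j * (z - zs j) / d j) +
         (a i * ρ / d i) * (a j * ρ / d j)) := by
      rw [hXdef, hYdef, sq, sq, Finset.sum_mul_sum, Finset.sum_mul_sum,
        ← Finset.sum_add_distrib]
      congr 1; ext i
      rw [← Finset.sum_add_distrib]
    rw [expand]
    calc (∑ i, ∑ j, ((a i * (z - zs i) / d i) * (a j * (z - zs j) / d j) +
          (a i * ρ / d i) * (a j * ρ / d j)))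
        ≤ ∑ i, ∑ j, a i * a j := by
          refine Finset.sum_le_sum fun i _ => Finset.sum_le_sum fun j _ => ?_
          exact pair_aux _ _ _ _ _ _ (ha i) (ha j) (hsq i) (hsq j)
      _ = 1 := by rw [← Finset.sum_mul_sum, hsum, one_mul]
  -- 1 ≤ S * T
  have hST : 1 ≤ S * T := by
    have key := Finset.sum_sq_le_sum_mul_sum_of_sq_eq_mul (univ : Finset (Fin r))
      (r := a) (f := fun i => a i * d i) (g := fun i => a i / d i)
      (fun i _ => (mul_pos (ha i) (hd i)).le)
      (fun i _ => (div_pos (ha i) (hd i)).le)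
      (fun i _ => by
        have := (hd i).ne'
        field_simp)
    rw [hsum, one_pow] at key
    exact key
  -- main algebra
  have hAS : 0 < A + S := by linarith
  have hQ : T * (A + S) ≤ T * (A + S) / (X ^ 2 + Y ^ 2) := by
    rw [le_div_iff₀ hDpos]
    nlinarith [mul_pos hT hAS]
  have hmain : 1 + A * T ≤ Vfun A a zs ρ z := by
    have hV : Vfun A a zs ρ z =
        (1 / A) * (A + S) * (T * (A + S) / (X ^ 2 + Y ^ 2) - 1) := by
      rw [Vfun]
    rw [hV]
    have step1 : (1 / A) * (A + S) * (T * (A + S) - 1) ≤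
        (1 / A) * (A + S) * (T * (A + S) / (X ^ 2 + Y ^ 2) - 1) := by
      have hpos : 0 < (1 / A) * (A + S) := by positivity
      nlinarith [hQ]
    refine le_trans ?_ step1
    rw [div_mul_eq_mul_div, div_mul_eq_mul_div, le_div_iff₀ hA]
    nlinarith [mul_nonneg (sub_nonneg.2 hST) (by linarith : (0:ℝ) ≤ 2 * A + S)]
  exact ⟨hmain, by nlinarith [mul_pos hA hT]⟩
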